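/- For every integral connectivity structure 𝒦 on a finite nonempty set I, 𝒦 equals the set of those subsets A ⊆ I such that every dissociation of A is contested by some irreducible connected set K ∈ 𝒦̃. -/

import Mathlib

universe u

variable {I : Type u}

/-- `{J₁, J₂}` is a dissociation of `J ⊆ I`: an (unordered) pair of nonempty
disjoint subsets whose union is `J`. -/
def IsDissociation (J J1 J2 : Set I) : Prop :=
  J1.Nonempty ∧ J2.Nonempty ∧ Disjoint J1 J2 ∧ J1 ∪ J2 = J

/-- `A` contests the dissociation `{J₁, J₂}`. -/
def Contests (A J1 J2 : Set I) : Prop :=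
  A ⊆ J1 ∪ J2 ∧ (A ∩ J1).Nonempty ∧ (A ∩ J2).Nonempty

/-- An integral connectivity structure on `I`. -/
def IsConnectivity (𝒦 : Set (Set I)) : Prop :=
  ∅ ∈ 𝒦 ∧ (∀ i : I, ({i} : Set I) ∈ 𝒦) ∧
    ∀ K L : Set I, K ∈ 𝒦 → L ∈ 𝒦 → (K ∩ L).Nonempty → K ∪ L ∈ 𝒦

/-- The integral connectivity structure generated by `𝒜`. -/
def generated (𝒜 : Set (Set I)) : Set (Set I) :=
  ⋂₀ {𝒦 : Set (Set I) | IsConnectivity 𝒦 ∧ 𝒜 ⊆ 𝒦}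

/-- The set `𝒦̃` of irreducible members of `𝒦` with at least two elements. -/
def irred (𝒦 : Set (Set I)) : Set (Set I) :=
  {K | K ∈ 𝒦 ∧ K ∉ generated (𝒦 \ {K}) ∧ 2 ≤ K.ncard}

/-- The sum of two integral connectivity structures: `𝒦₁ ⊕ 𝒦₂ = [𝒦₁ ∪ 𝒦₂]`. -/
def csum (𝒦₁ 𝒦₂ : Set (Set I)) : Set (Set I) := generated (𝒦₁ ∪ 𝒦₂)

/-- The discrete integral connectivity structure on `I`. -/
def discreteStructure (I : Type u) : Set (Set I) :=
  {(∅ : Set I)} ∪ {A : Set I | ∃ i : I, A = {i}}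

/-- `C` is a connected component of `(I, 𝒦)`: a maximal member of `𝒦`. -/
def IsComponent (𝒦 : Set (Set I)) (C : Set I) : Prop :=
  C ∈ 𝒦 ∧ ∀ K ∈ 𝒦, C ⊆ K → K = C

/-- `Γ_𝒜`: subsets of `I` all of whose dissociations are contested by a member of `𝒜`. -/
def Gamma (𝒜 : Set (Set I)) : Set (Set I) :=
  {B | ∀ J1 J2 : Set I, IsDissociation B J1 J2 → ∃ A ∈ 𝒜, Contests A J1 J2}

/-- A random family on `I`: a finite probability space together with finitely
valued random variables indexed by `I`. -/
structure RandomFamily (I : Type u) where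
  Ω : Type
  [fintΩ : Fintype Ω]
  P : Ω → ℝ
  P_nonneg : ∀ ω, 0 ≤ P ω
  P_total : ∑ ω, P ω = 1
  R : I → Type
  [fintR : ∀ i, Fintype (R i)]
  X : ∀ i, Ω → R i

attribute [instance] RandomFamily.fintΩ RandomFamily.fintR

/-- Probability of an event. -/
noncomputable def RandomFamily.prob (φ : RandomFamily I) (E : Set φ.Ω) : ℝ :=
  ∑ ω, E.indicator φ.P ω

/-- `P(X_J = x_J)`. -/
noncomputable def RandomFamily.probEq (φ : RandomFamily I) (J : Set I)
    (x : ∀ i, φ.R i) : ℝ :=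
  φ.prob {ω | ∀ j ∈ J, φ.X j ω = x j}

/-- `φ` respects the dissociation `{J₁, J₂}`:
`P(X_{J₁∪J₂} = x) = P(X_{J₁} = x) · P(X_{J₂} = x)` for all tuples of values. -/
def RandomFamily.Respects (φ : RandomFamily I) (J1 J2 : Set I) : Prop :=
  ∀ x : ∀ i, φ.R i, φ.probEq (J1 ∪ J2) x = φ.probEq J1 x * φ.probEq J2 x

/-- The connectivity structure `K_φ` of a random family: the subsets `J ⊆ I`
such that `φ` contests every dissociation of `J`. -/
def RandomFamily.Kconn (φ : RandomFamily I) : Set (Set I) :=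
  {J | ∀ J1 J2 : Set I, IsDissociation J J1 J2 → ¬ φ.Respects J1 J2}

/-- Tensor product of two random families. -/
noncomputable def RandomFamily.tensor (φ ψ : RandomFamily I) : RandomFamily I where
  Ω := φ.Ω × ψ.Ω
  fintΩ := inferInstance
  P := fun p => φ.P p.1 * ψ.P p.2
  P_nonneg := fun p => mul_nonneg (φ.P_nonneg _) (ψ.P_nonneg _)
  P_total := by
    rw [Fintype.sum_prod_type]
    simp only [← Finset.mul_sum]
    rw [ψ.P_total]
    simp only [mul_one]
    exact φ.P_total
  R := fun i => φ.R i × ψ.R i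
  fintR := fun i => inferInstance
  X := fun i p => (φ.X i p.1, ψ.X i p.2)

/-- Restriction of a random family to a subset `J ⊆ I`. -/
def RandomFamily.restrict (φ : RandomFamily I) (J : Set I) : RandomFamily J where
  Ω := φ.Ω
  fintΩ := inferInstance
  P := φ.P
  P_nonneg := φ.P_nonneg
  P_total := φ.P_total
  R := fun j => φ.R (j : I)
  fintR := fun j => inferInstance
  X := fun j => φ.X (j : I)

/-- The canonical `M`-brunnian family on `I`, for `M` of cardinality `m`
(with elements listed in increasing order). -/
noncomputable def brunnian [LinearOrder I] (M : Finset I) (m : ℕ) (h : M.card = m) :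
    RandomFamily I where
  Ω := Fin (m - 1) → ZMod 2
  fintΩ := inferInstance
  P := fun _ => ((2 : ℝ) ^ (m - 1))⁻¹
  P_nonneg := fun _ => by positivity
  P_total := by
    have hcard : Fintype.card (Fin (m - 1) → ZMod 2) = 2 ^ (m - 1) := by
      rw [Fintype.card_fun]
      simp
    rw [Finset.sum_const, Finset.card_univ, hcard, nsmul_eq_mul]
    push_cast
    exact mul_inv_cancel₀ (by positivity)
  R := fun _ => ZMod 2
  fintR := fun _ => inferInstance
  X := fun i ω =>
    if hi : i ∈ M then
      if hk : (((M.orderIsoOfFin h).symm ⟨i, hi⟩ : Fin m) : ℕ) < m - 1 then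
        ω ⟨_, hk⟩
      else ∑ j, ω j
    else 0
lemma subset_gamma_self (𝒜 : Set (Set I)) : 𝒜 ⊆ Gamma 𝒜 := by
  intro A hA J1 J2 ⟨h1, h2, hd, hu⟩
  refine ⟨A, hA, hu.symm.subset, ?_, ?_⟩
  · obtain ⟨x, hx⟩ := h1
    exact ⟨x, hu ▸ Or.inl hx, hx⟩
  · obtain ⟨x, hx⟩ := h2
    exact ⟨x, hu ▸ Or.inr hx, hx⟩

lemma gamma_isConnectivity (𝒜 : Set (Set I)) : IsConnectivity (Gamma 𝒜) := by
  refine ⟨?_, ?_, ?_⟩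
  · rintro J1 J2 ⟨⟨x, hx⟩, h2, hd, hu⟩
    exact absurd (hu ▸ Or.inl hx : x ∈ (∅ : Set I)) (Set.notMem_empty x)
  · rintro i J1 J2 ⟨⟨x, hx⟩, ⟨y, hy⟩, hd, hu⟩
    have hx' : x ∈ ({i} : Set I) := hu ▸ Or.inl hx
    have hy' : y ∈ ({i} : Set I) := hu ▸ Or.inr hy
    rw [Set.mem_singleton_iff] at hx' hy'
    exact (hd.ne_of_mem hx hy (hx'.trans hy'.symm)).elim
  · rintro K L hK hL ⟨z, hzK, hzL⟩ J1 J2 ⟨h1, h2, hd, hu⟩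
    by_cases hK1 : (K ∩ J1).Nonempty ∧ (K ∩ J2).Nonempty
    · obtain ⟨A, hA, hAs, hA1, hA2⟩ := hK (K ∩ J1) (K ∩ J2)
        ⟨hK1.1, hK1.2, hd.mono Set.inter_subset_right Set.inter_subset_right, by
          rw [← Set.inter_union_distrib_left, hu]
          exact Set.inter_eq_self_of_subset_left (Set.subset_union_left)⟩
      exact ⟨A, hA, hAs.trans (Set.union_subset_union Set.inter_subset_right
        Set.inter_subset_right), hA1.mono (Set.inter_subset_inter_right _
        Set.inter_subset_right), hA2.mono (Set.inter_subset_inter_right _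
        Set.inter_subset_right)⟩
    · by_cases hL1 : (L ∩ J1).Nonempty ∧ (L ∩ J2).Nonempty
      · obtain ⟨A, hA, hAs, hA1, hA2⟩ := hL (L ∩ J1) (L ∩ J2)
          ⟨hL1.1, hL1.2, hd.mono Set.inter_subset_right Set.inter_subset_right, by
            rw [← Set.inter_union_distrib_left, hu]
            exact Set.inter_eq_self_of_subset_left (Set.subset_union_right)⟩
        exact ⟨A, hA, hAs.trans (Set.union_subset_union Set.inter_subset_right
          Set.inter_subset_right), hA1.mono (Set.inter_subset_inter_right _
          Set.inter_subset_right), hA2.mono (Set.inter_subset_inter_right _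
          Set.inter_subset_right)⟩
      · -- K and L are each inside J1 or J2; derive contradiction
        exfalso
        have hKsub : K ⊆ J1 ∪ J2 := hu ▸ Set.subset_union_left
        have hLsub : L ⊆ J1 ∪ J2 := hu ▸ Set.subset_union_right
        have sub_of : ∀ S : Set I, S ⊆ J1 ∪ J2 →
            ¬((S ∩ J1).Nonempty ∧ (S ∩ J2).Nonempty) → S ⊆ J1 ∨ S ⊆ J2 := by
          intro S hS h
          rcases not_and_or.mp h with h | h <;>
            rw [Set.not_nonempty_iff_eq_empty] at h
          · exact Or.inr fun x hx => (hS hx).resolve_left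
              fun h1 => Set.eq_empty_iff_forall_notMem.mp h x ⟨hx, h1⟩
          · exact Or.inl fun x hx => (hS hx).resolve_right
              fun h1 => Set.eq_empty_iff_forall_notMem.mp h x ⟨hx, h1⟩
        have same : ∀ S T : Set I, S ⊆ J1 → T ⊆ J2 → z ∈ S → z ∈ T → False :=
          fun S T hS hT h1 h2 => hd.ne_of_mem (hS h1) (hT h2) rfl
        rcases sub_of K hKsub hK1 with hK' | hK' <;>
          rcases sub_of L hLsub hL1 with hL' | hL'
        · obtain ⟨y, hy⟩ := h2
          have : y ∈ K ∪ L := hu.symm ▸ Or.inr hy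
          exact hd.ne_of_mem (this.elim (fun h => hK' h) (fun h => hL' h)) hy rfl
        · exact same K L hK' hL' hzK hzL
        · exact same L K hL' hK' hzL hzK
        · obtain ⟨y, hy⟩ := h1
          have : y ∈ K ∪ L := hu.symm ▸ Or.inl hy
          exact hd.ne_of_mem hy (this.elim (fun h => hK' h) (fun h => hL' h)) rfl

lemma generated_subset_gamma (𝒜 : Set (Set I)) : generated 𝒜 ⊆ Gamma 𝒜 :=
  fun _ hB => hB _ ⟨gamma_isConnectivity 𝒜, subset_gamma_self 𝒜⟩

/-- an integral connectivity structure `𝒦` equals the set of subsets `A`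
such that every dissociation of `A` is contested by some irreducible connected set
`K ∈ 𝒦̃`. -/
theorem stmt5 {I : Type u} [Fintype I] [Nonempty I] (𝒦 : Set (Set I))
    (h𝒦 : IsConnectivity 𝒦) :
    𝒦 = {A : Set I | ∀ J1 J2 : Set I, IsDissociation A J1 J2 →
          ∃ K ∈ irred 𝒦, Contests K J1 J2} := by
  ext A
  simp only [Set.mem_setOf_eq]
  constructor
  · -- forward direction: strong induction on ncard
    have main : ∀ n (A : Set I), A.ncard ≤ n → A ∈ 𝒦 → ∀ J1 J2 : Set I,
        IsDissociation A J1 J2 → ∃ K ∈ irred 𝒦, Contests K J1 J2 := by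
      intro n
      induction n with
      | zero =>
        rintro A hn hA J1 J2 ⟨⟨x, hx⟩, _, _, hu⟩
        have hxA : x ∈ A := hu ▸ Or.inl hx
        rw [Nat.le_zero, Set.ncard_eq_zero (Set.toFinite A)] at hn
        exact absurd (hn ▸ hxA) (Set.notMem_empty x)
      | succ n ih =>
        rintro A hn hA J1 J2 ⟨h1, h2, hd, hu⟩
        have h2card : 2 ≤ A.ncard := by
          obtain ⟨x, hx⟩ := h1
          obtain ⟨y, hy⟩ := h2
          have hxy : x ≠ y := hd.ne_of_mem hx hy
          have hsub : ({x, y} : Set I) ⊆ A := by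
            rw [← hu]
            rintro z (rfl | rfl)
            exacts [Or.inl hx, Or.inr hy]
          calc 2 = ({x, y} : Set I).ncard := (Set.ncard_pair hxy).symm
            _ ≤ A.ncard := Set.ncard_le_ncard hsub (Set.toFinite A)
        by_cases hirr : A ∈ irred 𝒦
        · refine ⟨A, hirr, hu.symm.subset, ?_, ?_⟩
          · obtain ⟨x, hx⟩ := h1
            exact ⟨x, hu ▸ Or.inl hx, hx⟩
          · obtain ⟨x, hx⟩ := h2
            exact ⟨x, hu ▸ Or.inr hx, hx⟩
        · have hgen : A ∈ generated (𝒦 \ {A}) := by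
            by_contra hg
            exact hirr ⟨hA, hg, h2card⟩
          obtain ⟨B, hB𝒦, hBs, hB1, hB2⟩ :=
            generated_subset_gamma _ hgen J1 J2 ⟨h1, h2, hd, hu⟩
          have hBA : B ⊆ A := hu ▸ hBs
          have hss : B ⊂ A := hBA.ssubset_of_ne hB𝒦.2
          have hcard : B.ncard ≤ n := by
            have := Set.ncard_lt_ncard hss (Set.toFinite A)
            omega
          obtain ⟨K, hK, hKs, hK1, hK2⟩ := ih B hcard hB𝒦.1 (J1 ∩ B) (J2 ∩ B)
            ⟨by rwa [Set.inter_comm] at hB1, by rwa [Set.inter_comm] at hB2,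
              hd.mono Set.inter_subset_left Set.inter_subset_left, by
                rw [← Set.union_inter_distrib_right]
                exact Set.inter_eq_self_of_subset_right hBs⟩
          exact ⟨K, hK, hKs.trans (Set.union_subset_union Set.inter_subset_left
            Set.inter_subset_left),
            hK1.mono (Set.inter_subset_inter_right _ Set.inter_subset_left),
            hK2.mono (Set.inter_subset_inter_right _ Set.inter_subset_left)⟩
    exact fun hA => main A.ncard A le_rfl hA
  · intro hA
    rcases A.eq_empty_or_nonempty with rfl | ⟨a, ha⟩
    · exact h𝒦.1
    · obtain ⟨K, hKS, hmax⟩ := Set.Finite.exists_maximalFor id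
        {K | K ∈ 𝒦 ∧ a ∈ K ∧ K ⊆ A} (Set.toFinite _)
        ⟨{a}, h𝒦.2.1 a, rfl, Set.singleton_subset_iff.mpr ha⟩
      obtain ⟨hK𝒦, haK, hKA⟩ := hKS
      by_cases hKeq : K = A
      · exact hKeq ▸ hK𝒦
      · exfalso
        have hne : (A \ K).Nonempty :=
          Set.diff_nonempty.mpr fun h => hKeq (subset_antisymm hKA h)
        obtain ⟨L, hLirr, hLs, hL1, hL2⟩ := hA K (A \ K)
          ⟨⟨a, haK⟩, hne, Set.disjoint_sdiff_right, Set.union_diff_cancel hKA⟩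
        have hKL : K ∪ L ∈ 𝒦 := by
          obtain ⟨w, hwL, hwK⟩ := hL1
          exact h𝒦.2.2 K L hK𝒦 hLirr.1 ⟨w, hwK, hwL⟩
        have hmem : K ∪ L ∈ {K | K ∈ 𝒦 ∧ a ∈ K ∧ K ⊆ A} :=
          ⟨hKL, Or.inl haK, Set.union_subset hKA
            (hLs.trans (Set.union_diff_cancel hKA).subset)⟩
        have heq : K = K ∪ L := subset_antisymm Set.subset_union_left (hmax hmem Set.subset_union_left)
        obtain ⟨y, hyL, hyA, hyK⟩ := hL2
        exact hyK (heq ▸ (Or.inr hyL : y ∈ K ∪ L))
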